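/- Let δ > 0 and let N, η be real numbers with N > η > 0. Then q* = (1 - η/N)/(η·N + η + N - η²) satisfies the first-order condition δ·(1 - η/N)·(1 - η·N·q*) - δ·(η + N)·q* = 0, the denominator N·(η+1) - η·(η-1) is strictly positive, and total exports Q = N·q* equal (N - η)/(N·(η + 1) - η·(η - 1)). -/

import Mathlib

/-- Symmetric oligopoly equilibrium exports under the TIC Agreement
(Proposition 10, interior case). -/
theorem stmt_13 (δ N η : ℝ) (hδ : 0 < δ) (hη : 0 < η) (hN : η < N) :
    let q : ℝ := (1 - η / N) / (η * N + η + N - η ^ 2)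
    δ * (1 - η / N) * (1 - η * N * q) - δ * (η + N) * q = 0 ∧
    0 < N * (η + 1) - η * (η - 1) ∧
    N * q = (N - η) / (N * (η + 1) - η * (η - 1)) := by
  intro q
  have hN0 : 0 < N := hη.trans hN
  have hD : 0 < η * N + η + N - η ^ 2 := by nlinarith
  have hD' : 0 < N * (η + 1) - η * (η - 1) := by nlinarith
  refine ⟨?_, hD', ?_⟩
  · show δ * (1 - η / N) * (1 - η * N * ((1 - η / N) / (η * N + η + N - η ^ 2))) -
      δ * (η + N) * ((1 - η / N) / (η * N + η + N - η ^ 2)) = 0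
    have h4 : η * (N + 1) + N - η ^ 2 ≠ 0 := by nlinarith
    field_simp [hD.ne', hN0.ne']
    ring
  · show N * ((1 - η / N) / (η * N + η + N - η ^ 2)) = _
    have h4 : η * (N + 1) + N - η ^ 2 ≠ 0 := by nlinarith
    field_simp [hD.ne', hD'.ne', hN0.ne']
    ring
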